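/- Let 0 < ε ≤ 0.1, n ≥ 2, T ≥ 1. For any two distinct indices v, v* ∈ {1,…,n}, the expectation under P_{v*}^T of the likelihood ratio P_v^T / P_0^T equals 1; that is, Σ_{g ∈ Ω^T} P_{v*}^T(g) · P_v^T(g) / P_0^T(g) = 1. -/
import Mathlib


open scoped BigOperators

/-- The sample space of a single round: an advice vector `a ∈ {0,1}ⁿ`
and a correct-arm indicator `c ∈ {0,1}`. -/
abbrev Omg (n : ℕ) := (Fin n → Bool) × Bool

/-- Under `P0`, the advice vector is uniform on `{0,1}ⁿ` and the correct-arm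
indicator is uniform on `{0,1}`, independently. -/
noncomputable def P0 (n : ℕ) : Omg n → ℝ := fun _ => (1 / 2 : ℝ) ^ (n + 1)

/-- Under `Pv n ε v`, the advice vector is uniform on `{0,1}ⁿ` and, conditionally on it,
the correct-arm indicator equals its `v`-th entry with probability `1/2 + ε`. -/
noncomputable def Pv (n : ℕ) (ε : ℝ) (v : Fin n) : Omg n → ℝ := fun w =>
  (1 / 2 : ℝ) ^ n * (if w.2 = w.1 v then 1 / 2 + ε else 1 / 2 - ε)

/-- `T`-fold product of a probability mass function on `Omg n`. -/
noncomputable def prodP {n : ℕ} (T : ℕ) (P : Omg n → ℝ) : (Fin T → Omg n) → ℝ :=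
  fun g => ∏ t, P (g t)

lemma sum_ite_eq_zero (n : ℕ) (v vstar : Fin n) (hne : v ≠ vstar) (x : ℝ) :
    ∑ a : Fin n → Bool, (if a v = a vstar then x else -x) = 0 := by
  apply Finset.sum_involution (fun a _ => Function.update a v (!(a v)))
  · intro a _
    have h1 : Function.update a v (!(a v)) v = !(a v) := Function.update_self _ _ _
    have h2 : Function.update a v (!(a v)) vstar = a vstar := Function.update_of_ne (Ne.symm hne) _ _
    rw [h1, h2]
    by_cases h : a v = a vstar
    · rw [if_pos h, if_neg (by simp [← h]), add_neg_cancel]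
    · rw [if_neg h, if_pos (by cases hv : a v <;> cases hs : a vstar <;> simp_all), neg_add_cancel]
  · intro a _ _ heq
    have := congrFun heq v
    simp at this
  · intro a _
    funext j
    by_cases h : j = v
    · subst h; simp
    · simp [Function.update_of_ne h]
  · intro a _
    exact Finset.mem_univ _

lemma sum_F (n : ℕ) (ε : ℝ) (v vstar : Fin n) (hne : v ≠ vstar) :
    ∑ w : Omg n, Pv n ε vstar w * Pv n ε v w / P0 n w = 1 := by
  rw [Fintype.sum_prod_type]
  have hstep : ∀ a : Fin n → Bool,
      ∑ c : Bool, Pv n ε vstar (a, c) * Pv n ε v (a, c) / P0 n (a, c)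
        = 2 * (1/2:ℝ)^n * (1/2 + (if a v = a vstar then 2*ε^2 else -(2*ε^2))) := by
    intro a
    simp only [Fintype.sum_bool, Pv, P0]
    have hhalf : ((1:ℝ)/2) ^ (n+1) = (1/2)^n * (1/2) := pow_succ _ _
    rw [hhalf]
    have hp : ((1:ℝ)/2)^n ≠ 0 := by positivity
    rcases Bool.eq_false_or_eq_true (a v) with hv | hv <;>
      rcases Bool.eq_false_or_eq_true (a vstar) with hs | hs <;>
        simp only [hv, hs] <;> norm_num <;> field_simp <;> ring
  rw [Finset.sum_congr rfl (fun a _ => hstep a)]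
  rw [← Finset.mul_sum, Finset.sum_add_distrib, sum_ite_eq_zero n v vstar hne, add_zero,
    Finset.sum_const, Finset.card_univ]
  have h1 : ((1:ℝ)/2)^n = ((2:ℝ)^n)⁻¹ := by rw [one_div, inv_pow]
  have h2 : ((2:ℝ)^n) ≠ 0 := by positivity
  simp only [h1, Fintype.card_fun, Fintype.card_bool, Fintype.card_fin, nsmul_eq_mul]
  push_cast
  field_simp


/-- for distinct `v ≠ v*`, the expectation under `P_{v*}^T` of the
likelihood ratio `P_v^T / P_0^T` equals `1`. -/
theorem stmt6 (n T : ℕ) (ε : ℝ) (hε : 0 < ε) (hε' : ε ≤ 0.1) (hn : 2 ≤ n) (hT : 1 ≤ T)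
    (v vstar : Fin n) (hne : v ≠ vstar) :
    ∑ g : Fin T → Omg n,
        prodP T (Pv n ε vstar) g * (prodP T (Pv n ε v) g / prodP T (P0 n) g) = 1 := by
  have hterm : ∀ g : Fin T → Omg n,
      prodP T (Pv n ε vstar) g * (prodP T (Pv n ε v) g / prodP T (P0 n) g)
        = ∏ t, (Pv n ε vstar (g t) * Pv n ε v (g t) / P0 n (g t)) := by
    intro g
    simp only [prodP]
    rw [Finset.prod_div_distrib, Finset.prod_mul_distrib, mul_div_assoc]
  rw [Finset.sum_congr rfl (fun g _ => hterm g)]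
  have key := Finset.prod_univ_sum (fun _ : Fin T => (Finset.univ : Finset (Omg n)))
    (fun _ w => Pv n ε vstar w * Pv n ε v w / P0 n w)
  rw [Fintype.piFinset_univ] at key
  rw [← key]
  rw [Finset.prod_congr rfl (fun t _ => sum_F n ε v vstar hne)]
  simp
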